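/- Let m : ℝ → ℝ be odd with m(σ) = m̃(|σ|)·sgn(σ) where m̃ : [0,∞)→[0,∞) is convex, increasing, m̃(0)=0, and doubling with constant c. Then there exists a constant c' > 0 depending only on c such that for all u, v ∈ ℝ: (m(u) − m(v))·sgn(u − v) ≥ c'·m̃(|u − v|). -/

import Mathlib

open Set

theorem sign_condition_monotonicity (c : ℝ) (hc : 1 ≤ c) :
    ∃ c' : ℝ, 0 < c' ∧
      ∀ (mt m : ℝ → ℝ),
        ConvexOn ℝ (Ici (0:ℝ)) mt → MonotoneOn mt (Ici (0:ℝ)) → mt 0 = 0 →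
        (∀ t ≥ 0, mt (2 * t) ≤ c * mt t) →
        (∀ σ : ℝ, m σ = mt |σ| * Real.sign σ) →
        ∀ u v : ℝ, c' * mt |u - v| ≤ (m u - m v) * Real.sign (u - v) := by
  have hc0 : (0:ℝ) < c := lt_of_lt_of_le one_pos hc
  refine ⟨c⁻¹, inv_pos.mpr hc0, ?_⟩
  intro mt m hconv hmono h0 hdbl hm
  -- nonnegativity of mt on [0,∞)
  have hnn : ∀ t, 0 ≤ t → 0 ≤ mt t := by
    intro t ht
    have := hmono (self_mem_Ici) (mem_Ici.mpr ht) ht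
    linarith [h0]
  -- superadditivity
  have hsuper : ∀ a b : ℝ, 0 ≤ a → 0 ≤ b → mt a + mt b ≤ mt (a + b) := by
    intro a b ha hb
    rcases eq_or_lt_of_le (add_nonneg ha hb) with hs | hs
    · have ha0 : a = 0 := by linarith [hb, ha]
      have hb0 : b = 0 := by linarith
      simp [ha0, hb0, h0]
    · set s := a + b with hsdef
      have hxa : mt a ≤ (a / s) * mt s := by
        have h1 : mt ((b / s) • (0:ℝ) + (a / s) • s) ≤
            (b / s) • mt 0 + (a / s) • mt s :=
          hconv.2 self_mem_Ici (mem_Ici.mpr hs.le)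
            (div_nonneg hb hs.le) (div_nonneg ha hs.le)
            (by field_simp <;> linarith [hsdef])
        have : (b / s) • (0:ℝ) + (a / s) • s = a := by
          rw [smul_eq_mul, smul_eq_mul, mul_zero, zero_add, div_mul_cancel₀ a hs.ne']
        rw [this, h0] at h1
        simpa using h1
      have hxb : mt b ≤ (b / s) * mt s := by
        have h1 : mt ((a / s) • (0:ℝ) + (b / s) • s) ≤
            (a / s) • mt 0 + (b / s) • mt s :=
          hconv.2 self_mem_Ici (mem_Ici.mpr hs.le)
            (div_nonneg ha hs.le) (div_nonneg hb hs.le)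
            (by field_simp <;> linarith [hsdef])
        have : (a / s) • (0:ℝ) + (b / s) • s = b := by
          rw [smul_eq_mul, smul_eq_mul, mul_zero, zero_add, div_mul_cancel₀ b hs.ne']
        rw [this, h0] at h1
        simpa using h1
      have : (a / s) * mt s + (b / s) * mt s = mt s := by
        field_simp
        rw [hsdef]; ring
      linarith
  -- value of m
  have hmval_pos : ∀ σ : ℝ, 0 < σ → m σ = mt σ := by
    intro σ hσ
    rw [hm, abs_of_pos hσ, Real.sign_of_pos hσ, mul_one]
  have hmval_zero : m 0 = 0 := by
    rw [hm]; simp [Real.sign_zero]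
  have hmval_neg : ∀ σ : ℝ, σ < 0 → m σ = -mt (-σ) := by
    intro σ hσ
    rw [hm, abs_of_neg hσ, Real.sign_of_neg hσ]; ring
  have hmval0 : ∀ σ : ℝ, 0 ≤ σ → m σ = mt σ := by
    intro σ hσ
    rcases eq_or_lt_of_le hσ with h | h
    · rw [← h, hmval_zero, h0]
    · exact hmval_pos σ h
  have hcinv1 : c⁻¹ ≤ 1 := inv_le_one_of_one_le₀ hc
  -- key lemma for v < u
  have key : ∀ u v : ℝ, v < u → c⁻¹ * mt (u - v) ≤ m u - m v := by
    intro u v huv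
    have huvp : 0 < u - v := sub_pos.mpr huv
    have hnn' : 0 ≤ mt (u - v) := hnn _ huvp.le
    rcases le_or_gt 0 v with hv | hv
    · -- 0 ≤ v < u
      have hu : 0 < u := lt_of_le_of_lt hv huv
      rw [hmval_pos u hu, hmval0 v hv]
      have := hsuper v (u - v) hv huvp.le
      have h2 : mt (u - v) ≤ mt u - mt v := by
        have : v + (u - v) = u := by ring
        linarith [hsuper v (u - v) hv huvp.le, this ▸ hsuper v (u - v) hv huvp.le]
      calc c⁻¹ * mt (u - v) ≤ 1 * mt (u - v) :=
            mul_le_mul_of_nonneg_right hcinv1 hnn'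
        _ = mt (u - v) := one_mul _
        _ ≤ mt u - mt v := h2
    · rcases le_or_gt u 0 with hu | hu
      · -- v < u ≤ 0
        rw [hmval_neg v hv]
        have hveq : -u + (u - v) = -v := by ring
        have hs := hsuper (-u) (u - v) (neg_nonneg.mpr hu) huvp.le
        rw [hveq] at hs
        have hmu : m u = -mt (-u) := by
          rcases eq_or_lt_of_le hu with h | h
          · subst h; simp [hmval_zero, h0]
          · exact hmval_neg u h
        rw [hmu]
        have hmtu : 0 ≤ mt (-u) := hnn (-u) (neg_nonneg.mpr hu)
        calc c⁻¹ * mt (u - v) ≤ 1 * mt (u - v) :=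
              mul_le_mul_of_nonneg_right hcinv1 hnn'
          _ = mt (u - v) := one_mul _
          _ ≤ -mt (-u) - -mt (-v) := by linarith
      · -- v < 0 < u
        rw [hmval_pos u hu, hmval_neg v hv]
        have hru : (0:ℝ) ≤ u := hu.le
        have hrv : (0:ℝ) ≤ -v := by linarith
        set M := max u (-v) with hM
        have hMnn : 0 ≤ M := le_trans hru (le_max_left _ _)
        have h1 : u - v ≤ 2 * M := by
          have h1a := le_max_left u (-v); have h1b := le_max_right u (-v)
          rw [hM]; linarith
        have h2 : mt (u - v) ≤ mt (2 * M) :=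
          hmono (mem_Ici.mpr huvp.le) (mem_Ici.mpr (by linarith)) h1
        have h3 : mt (2 * M) ≤ c * mt M := hdbl M hMnn
        have h4 : mt M ≤ mt u + mt (-v) := by
          rcases max_cases u (-v) with ⟨he, _⟩ | ⟨he, _⟩
          · rw [hM, he]; linarith [hnn (-v) hrv]
          · rw [hM, he]; linarith [hnn u hru]
        have h5 : mt (u - v) ≤ c * (mt u + mt (-v)) := by
          have := mul_le_mul_of_nonneg_left h4 hc0.le
          linarith
        have : c⁻¹ * mt (u - v) ≤ c⁻¹ * (c * (mt u + mt (-v))) :=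
          mul_le_mul_of_nonneg_left h5 (inv_pos.mpr hc0).le
        calc c⁻¹ * mt (u - v) ≤ c⁻¹ * (c * (mt u + mt (-v))) := this
          _ = mt u + mt (-v) := by field_simp
          _ = mt u - -mt (-v) := by ring
  -- conclude
  intro u v
  rcases lt_trichotomy v u with h | h | h
  · rw [abs_of_pos (sub_pos.mpr h), Real.sign_of_pos (sub_pos.mpr h), mul_one]
    exact key u v h
  · rw [h]; simp [h0]
  · have hlt : u - v < 0 := sub_neg.mpr h
    rw [abs_of_neg hlt, Real.sign_of_neg hlt]
    have := key v u h
    have heq : -(u - v) = v - u := by ring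
    rw [heq]
    linarith
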